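/- Let A be an n×n positive semidefinite matrix with eigenvalues λ₁ ≥ λ₂ ≥ ... ≥ λₙ ≥ 0, and for λ > 0 define the effective dimension d_λ = ∑ᵢ λᵢ/(λᵢ+λ). Then for any γ > 0 and any index j with j ≥ (1+γ⁻¹)·d_λ, we have λⱼ ≤ γλ. -/
import Mathlib


/-- Lemma 5.4(1) of Frangella et al..
Let `lam 0 ≥ lam 1 ≥ ... ≥ lam (n-1) ≥ 0` be the eigenvalues of an `n × n` PSD matrix
(listed in non-increasing order, here as an antitone nonnegative sequence), let `μ > 0`, and
let `d = ∑ i, lam i / (lam i + μ)` be the effective dimension.  Then for any `γ > 0` and any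
(1-based) index `j` with `j ≥ (1 + γ⁻¹) * d`, we have `lam j ≤ γ * μ`. -/
theorem effective_dimension_eigenvalue_bound
    (n : ℕ) (lam : Fin n → ℝ) (hmono : Antitone lam) (hnn : ∀ i, 0 ≤ lam i)
    (μ : ℝ) (hμ : 0 < μ)
    (d : ℝ) (hd : d = ∑ i, lam i / (lam i + μ))
    (γ : ℝ) (hγ : 0 < γ)
    (j : Fin n) (hj : (1 + γ⁻¹) * d ≤ (j : ℕ) + 1) :
    lam j ≤ γ * μ := by
  by_contra hcon
  push_neg at hcon
  set c : ℝ := γ / (γ + 1) with hc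
  have hc0 : 0 < c := div_pos hγ (by linarith)
  have hterm : ∀ i : Fin n, i ≤ j → c < lam i / (lam i + μ) := by
    intro i hi
    have hli : γ * μ < lam i := lt_of_lt_of_le hcon (hmono hi)
    have hpos : 0 < lam i + μ := by have := hnn i; linarith
    rw [hc, div_lt_div_iff₀ (by linarith) hpos]
    nlinarith
  have hcard : (Finset.Iic j).card = (j : ℕ) + 1 := Fin.card_Iic j
  have hsum : ((j : ℕ) + 1 : ℝ) * c < ∑ i ∈ Finset.Iic j, lam i / (lam i + μ) := by
    have h := Finset.sum_lt_sum_of_nonempty (f := fun _ : Fin n => c)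
      (g := fun i => lam i / (lam i + μ)) ⟨j, Finset.mem_Iic.mpr le_rfl⟩
      (fun i hi => hterm i (Finset.mem_Iic.mp hi))
    rw [Finset.sum_const, hcard, nsmul_eq_mul] at h
    push_cast at h ⊢
    linarith
  have hle : ∑ i ∈ Finset.Iic j, lam i / (lam i + μ) ≤ d := by
    rw [hd]
    exact Finset.sum_le_sum_of_subset_of_nonneg (Finset.subset_univ _)
      (fun i _ _ => div_nonneg (hnn i) (by have := hnn i; linarith))
  have h1 : (1 + γ⁻¹) * c = 1 := by
    rw [hc]; field_simp
  have h2 : d ≤ ((j : ℕ) + 1 : ℝ) * c := by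
    calc d = ((1 + γ⁻¹) * d) * c := by rw [mul_right_comm, h1, one_mul]
    _ ≤ ((j : ℕ) + 1 : ℝ) * c := mul_le_mul_of_nonneg_right hj hc0.le
  linarith
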